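/- For a standard 4-dimensional Brownian motion (β_t), there is a constant C < ∞ such that for all t > 0 and x, y ∈ R^4 with x ≠ y: E[|β_t − x|^{-2} |β_t − y|^{-1}] ≤ 2C t^{-1/2} |x|^{-1} |y − x|^{-1}. -/

import Mathlib

open MeasureTheory ProbabilityTheory
open scoped NNReal ENNReal

noncomputable section

/-- Euclidean norm on `Fin d → ℝ`. -/
def nrm {d : ℕ} (x : Fin d → ℝ) : ℝ := Real.sqrt (∑ i, (x i) ^ 2)

/-- The law of a standard `d`-dimensional Brownian motion at time `t`:
`d` independent centered Gaussians of variance `t`. -/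
def gaussPi (d : ℕ) (t : ℝ≥0) : Measure (Fin d → ℝ) :=
  Measure.pi fun _ => gaussianReal 0 t

lemma nrm_nonneg {d : ℕ} (x : Fin d → ℝ) : 0 ≤ nrm x := Real.sqrt_nonneg _

lemma nrm_sq {d : ℕ} (x : Fin d → ℝ) : nrm x ^ 2 = ∑ i, (x i) ^ 2 :=
  Real.sq_sqrt (Finset.sum_nonneg fun i _ => sq_nonneg _)

lemma nrm_eq_norm {d : ℕ} (x : Fin d → ℝ) :
    nrm x = ‖(WithLp.equiv 2 (Fin d → ℝ)).symm x‖ := by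
  rw [EuclideanSpace.norm_eq]
  simp only [WithLp.equiv_symm_apply, Real.norm_eq_abs, sq_abs]
  rfl

lemma nrm_pos {d : ℕ} {x : Fin d → ℝ} (hx : x ≠ 0) : 0 < nrm x := by
  rw [nrm_eq_norm]
  simp only [norm_pos_iff]
  simpa using hx

lemma nrm_triangle {d : ℕ} (x y z : Fin d → ℝ) :
    nrm (y - x) ≤ nrm (z - x) + nrm (z - y) := by
  simp only [nrm_eq_norm, show ∀ a b : Fin d → ℝ, (WithLp.equiv 2 (Fin d → ℝ)).symm (a - b) = (WithLp.equiv 2 (Fin d → ℝ)).symm a - (WithLp.equiv 2 (Fin d → ℝ)).symm b from fun _ _ => rfl]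
  have : (WithLp.equiv 2 (Fin d → ℝ)).symm y - (WithLp.equiv 2 (Fin d → ℝ)).symm x
      = ((WithLp.equiv 2 (Fin d → ℝ)).symm z - (WithLp.equiv 2 (Fin d → ℝ)).symm x)
        - ((WithLp.equiv 2 (Fin d → ℝ)).symm z - (WithLp.equiv 2 (Fin d → ℝ)).symm y) := by abel
  rw [this]
  exact norm_sub_le _ _

lemma nrm_lower {d : ℕ} (z a : Fin d → ℝ) : nrm a - nrm (z - a) ≤ nrm z := by
  have h := nrm_triangle (0 : Fin d → ℝ) a z
  simp only [sub_zero] at h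
  linarith

lemma sup_le_nrm {d : ℕ} (x : Fin d → ℝ) : ‖x‖ ≤ nrm x := by
  rw [pi_norm_le_iff_of_nonneg (nrm_nonneg x)]
  intro i
  rw [Real.norm_eq_abs, nrm, ← Real.sqrt_sq_eq_abs]
  exact Real.sqrt_le_sqrt (Finset.single_le_sum (f := fun j => (x j)^2)
    (fun j _ => sq_nonneg _) (Finset.mem_univ i))

lemma continuous_nrm {d : ℕ} : Continuous (nrm (d := d)) := by
  unfold nrm
  fun_prop

lemma lintegral_pi_prod : ∀ {n : ℕ} (μ : Fin n → Measure ℝ) [∀ i, SigmaFinite (μ i)]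
    (f : Fin n → ℝ → ℝ≥0∞) (_ : ∀ i, Measurable (f i)),
    ∫⁻ z, ∏ i, f i (z i) ∂Measure.pi μ = ∏ i, ∫⁻ x, f i x ∂(μ i) := by
  intro n
  induction n with
  | zero =>
    intro μ _ f hf
    simp [Measure.pi_of_empty]
  | succ n ih =>
    intro μ _ f hf
    have hmp := measurePreserving_piFinSuccAbove μ 0
    have hG : Measurable fun p : ℝ × (Fin n → ℝ) => f 0 p.1 * ∏ j, f (Fin.succ j) (p.2 j) := by
      refine Measurable.mul ((hf 0).comp measurable_fst) ?_
      refine Finset.measurable_prod _ fun j _ => ?_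
      exact (hf _).comp ((measurable_pi_apply j).comp measurable_snd)
    calc ∫⁻ z, ∏ i, f i (z i) ∂Measure.pi μ
        = ∫⁻ z, (fun p : ℝ × (Fin n → ℝ) => f 0 p.1 * ∏ j, f (Fin.succ j) (p.2 j))
            ((MeasurableEquiv.piFinSuccAbove (fun _ => ℝ) 0) z) ∂Measure.pi μ := by
          refine lintegral_congr fun z => ?_
          rw [Fin.prod_univ_succ]
          rfl
      _ = ∫⁻ p, f 0 p.1 * ∏ j, f (Fin.succ j) (p.2 j)
            ∂((μ 0).prod (Measure.pi fun j => μ (Fin.succ j))) := by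
          exact hmp.lintegral_comp hG
      _ = ∏ i, ∫⁻ x, f i x ∂(μ i) := by
          rw [lintegral_prod _ hG.aemeasurable]
          have hstep : ∀ x : ℝ, ∫⁻ y, f 0 x * ∏ j, f (Fin.succ j) (y j)
              ∂(Measure.pi fun j => μ (Fin.succ j))
              = f 0 x * ∏ j, ∫⁻ s, f (Fin.succ j) s ∂μ (Fin.succ j) := by
            intro x
            have hmeas : Measurable fun y : Fin n → ℝ => ∏ j, f (Fin.succ j) (y j) :=
              Finset.measurable_prod _ fun j _ => (hf _).comp (measurable_pi_apply j)
            rw [lintegral_const_mul (f 0 x) hmeas, ih _ _ (fun j => hf _)]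
          simp_rw [hstep]
          rw [lintegral_mul_const _ (hf 0), Fin.prod_univ_succ]

lemma gaussPi_eq (t : ℝ≥0) (ht : t ≠ 0) :
    gaussPi 4 t = (volume : Measure (Fin 4 → ℝ)).withDensity
      (fun z => ∏ i, gaussianPDF 0 t (z i)) := by
  rw [gaussPi]
  have : (fun _ : Fin 4 => gaussianReal 0 t) = fun _ : Fin 4 => (volume : Measure ℝ).withDensity (gaussianPDF 0 t) := by
    funext _; exact gaussianReal_of_var_ne_zero 0 ht
  rw [this]
  haveI : SigmaFinite ((volume : Measure ℝ).withDensity (gaussianPDF 0 t)) := by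
    rw [← gaussianReal_of_var_ne_zero 0 ht]
    infer_instance
  refine Measure.pi_eq fun s hs => ?_
  rw [withDensity_apply _ (MeasurableSet.univ_pi hs)]
  have hind : ∀ z : Fin 4 → ℝ, (Set.univ.pi s).indicator
      (fun z => ∏ i, gaussianPDF 0 t (z i)) z
      = ∏ i, (s i).indicator (gaussianPDF 0 t) (z i) := by
    intro z
    by_cases hz : z ∈ Set.univ.pi s
    · rw [Set.indicator_of_mem hz]
      refine Finset.prod_congr rfl fun i _ => ?_
      rw [Set.indicator_of_mem (hz i (Set.mem_univ i))]
    · rw [Set.indicator_of_notMem hz]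
      simp only [Set.mem_pi, Set.mem_univ, forall_true_left] at hz
      push_neg at hz
      obtain ⟨i, hi⟩ := hz
      exact (Finset.prod_eq_zero (Finset.mem_univ i)
        (by rw [Set.indicator_of_notMem hi])).symm
  rw [← lintegral_indicator (MeasurableSet.univ_pi hs) _]
  simp_rw [hind]
  rw [show (volume : Measure (Fin 4 → ℝ)) = Measure.pi fun _ => volume from volume_pi]
  rw [lintegral_pi_prod _ _ (fun i => (measurable_gaussianPDF _ _).indicator (hs i))]
  refine Finset.prod_congr rfl fun i _ => ?_
  rw [withDensity_apply _ (hs i), ← lintegral_indicator (hs i) _]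

lemma density_eq (t : ℝ≥0) (ht : 0 < t) (z : Fin 4 → ℝ) :
    (∏ i, gaussianPDF 0 t (z i))
      = ENNReal.ofReal (((2 * Real.pi * (t:ℝ)) ^ 2)⁻¹ * Real.exp (-(nrm z) ^ 2 / (2 * (t:ℝ)))) := by
  have ht' : (0:ℝ) < 2 * Real.pi * t := by positivity
  simp_rw [gaussianPDF_def]
  rw [← ENNReal.ofReal_prod_of_nonneg (fun i _ => gaussianPDFReal_nonneg 0 t (z i))]
  congr 1
  unfold gaussianPDFReal
  rw [Finset.prod_mul_distrib, Finset.prod_const, ← Real.exp_sum]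
  congr 1
  · rw [Finset.card_univ, Fintype.card_fin, inv_pow, show (4:ℕ) = 2 * 2 from rfl, pow_mul,
      Real.sq_sqrt ht'.le]
  · have hsum : ∑ i : Fin 4, -(z i) ^ 2 = -∑ i : Fin 4, (z i) ^ 2 := by simp
    simp only [sub_zero]
    rw [nrm_sq, ← Finset.sum_div, hsum, neg_div]

lemma inv_sq_le {r : ℝ} (hr : 0 < r) {w : Fin 4 → ℝ} (h : r ≤ nrm w) :
    ((ENNReal.ofReal (nrm w))⁻¹) ^ 2 ≤ ENNReal.ofReal ((r ^ 2)⁻¹) := by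
  have h1 : (ENNReal.ofReal (nrm w))⁻¹ ≤ ENNReal.ofReal r⁻¹ := by
    rw [ENNReal.ofReal_inv_of_pos hr]
    exact ENNReal.inv_le_inv.mpr (ENNReal.ofReal_le_ofReal h)
  calc ((ENNReal.ofReal (nrm w))⁻¹) ^ 2 ≤ (ENNReal.ofReal r⁻¹) ^ 2 := pow_le_pow_left' h1 2
    _ = ENNReal.ofReal ((r ^ 2)⁻¹) := by
        rw [← ENNReal.ofReal_pow (by positivity)]
        congr 1
        rw [inv_pow]

lemma ball_lintegral {ρ : ℝ} (hρ : 0 < ρ) :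
    ∫⁻ w in Metric.ball (0 : Fin 4 → ℝ) ρ, ((ENNReal.ofReal (nrm w))⁻¹) ^ 2 ∂volume
      ≤ ENNReal.ofReal (256 / 3 * ρ ^ 2) := by
  set f : (Fin 4 → ℝ) → ℝ≥0∞ := fun w => ((ENNReal.ofReal (nrm w))⁻¹) ^ 2 with hf
  set A : ℕ → Set (Fin 4 → ℝ) := fun k =>
    Metric.ball 0 (ρ * (1/2) ^ k) \ Metric.ball 0 (ρ * (1/2) ^ (k+1)) with hA
  have hcover : Metric.ball (0 : Fin 4 → ℝ) ρ ⊆ {0} ∪ ⋃ k, A k := by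
    intro w hw
    rw [mem_ball_zero_iff] at hw
    by_cases hw0 : w = 0
    · exact Or.inl hw0
    · refine Or.inr ?_
      have hwpos : 0 < ‖w‖ := norm_pos_iff.mpr hw0
      have hex : ∃ k : ℕ, ρ * (1/2) ^ (k+1) ≤ ‖w‖ := by
        obtain ⟨n, hn⟩ := exists_pow_lt_of_lt_one (div_pos hwpos hρ) (by norm_num : (1/2:ℝ) < 1)
        rw [lt_div_iff₀ hρ] at hn
        refine ⟨n, ?_⟩
        have h1 : ((1:ℝ)/2) ^ (n+1) ≤ (1/2) ^ n :=
          pow_le_pow_of_le_one (by norm_num) (by norm_num) (by omega)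
        nlinarith
      obtain ⟨k, hlow, hup⟩ : ∃ k : ℕ, ρ * (1/2)^(k+1) ≤ ‖w‖ ∧ ‖w‖ < ρ * (1/2)^k := by
        refine ⟨Nat.find hex, Nat.find_spec hex, ?_⟩
        rcases Nat.eq_zero_or_pos (Nat.find hex) with h0 | hpos
        · rw [h0]; simpa using hw
        · have hmin := Nat.find_min hex (m := Nat.find hex - 1) (by omega)
          push_neg at hmin
          have hkk : Nat.find hex - 1 + 1 = Nat.find hex := by omega
          rwa [hkk] at hmin
      exact Set.mem_iUnion.mpr ⟨k, by
        simp only [hA, Set.mem_diff, mem_ball_zero_iff, not_lt]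
        exact ⟨hup, hlow⟩⟩
  calc ∫⁻ w in Metric.ball (0 : Fin 4 → ℝ) ρ, f w ∂volume
      ≤ ∫⁻ w in ({0} ∪ ⋃ k, A k : Set (Fin 4 → ℝ)), f w ∂volume :=
        lintegral_mono' (Measure.restrict_mono hcover le_rfl) le_rfl
    _ ≤ (∫⁻ w in ({0} : Set (Fin 4 → ℝ)), f w ∂volume) + ∫⁻ w in (⋃ k, A k), f w ∂volume :=
        lintegral_union_le _ _ _
    _ = ∫⁻ w in (⋃ k, A k), f w ∂volume := by
        have h0 : volume ({0} : Set (Fin 4 → ℝ)) = 0 := by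
          rw [show ({0} : Set (Fin 4 → ℝ)) = Set.univ.pi (fun _ => ({0} : Set ℝ)) by
            rw [Set.univ_pi_singleton]; rfl]
          rw [volume_pi_pi]
          simp
        rw [setLIntegral_measure_zero _ _ h0, zero_add]
    _ ≤ ∑' k, ∫⁻ w in A k, f w ∂volume := lintegral_iUnion_le _ _
    _ ≤ ∑' k : ℕ, ENNReal.ofReal (64 * ρ ^ 2 * (1/4) ^ k) := by
        refine ENNReal.tsum_le_tsum fun k => ?_
        have hrk : 0 < ρ * (1/2:ℝ) ^ (k+1) := by positivity
        have hbound : ∀ w ∈ A k, f w ≤ ENNReal.ofReal (((ρ * (1/2) ^ (k+1)) ^ 2)⁻¹) := by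
          intro w hw
          refine inv_sq_le hrk ?_
          have : ρ * (1/2) ^ (k+1) ≤ ‖w‖ := by
            have := hw.2
            rw [mem_ball_zero_iff, not_lt] at this
            exact this
          exact this.trans (sup_le_nrm w)
        calc ∫⁻ w in A k, f w ∂volume
            ≤ ∫⁻ _ in A k, ENNReal.ofReal (((ρ * (1/2) ^ (k+1)) ^ 2)⁻¹) ∂volume :=
              setLIntegral_mono measurable_const hbound
          _ = ENNReal.ofReal (((ρ * (1/2) ^ (k+1)) ^ 2)⁻¹) * volume (A k) :=
              setLIntegral_const _ _
          _ ≤ ENNReal.ofReal (((ρ * (1/2) ^ (k+1)) ^ 2)⁻¹) *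
              volume (Metric.ball (0 : Fin 4 → ℝ) (ρ * (1/2) ^ k)) := by
              gcongr
              exact Set.diff_subset
          _ ≤ ENNReal.ofReal (64 * ρ ^ 2 * (1/4) ^ k) := by
              rw [Real.volume_pi_ball _ (by positivity)]
              rw [← ENNReal.ofReal_mul (by positivity)]
              apply ENNReal.ofReal_le_ofReal
              rw [Fintype.card_fin]
              rw [show ((ρ * (1/2:ℝ) ^ (k+1)) ^ 2)⁻¹ * (2 * (ρ * (1/2) ^ k)) ^ 4
                = (ρ ^ 2 * ((1/2:ℝ)^k)^2 / 4)⁻¹ * (16 * ρ^4 * ((1/2)^k)^4) by ring]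
              have hq : ((1:ℝ)/4) ^ k = ((1/2:ℝ)^k)^2 := by
                rw [show ((1:ℝ)/4) = ((1/2:ℝ))^2 by norm_num, ← pow_mul, ← pow_mul,
                  Nat.mul_comm]
              rw [hq, show (ρ ^ 2 * ((1/2:ℝ) ^ k) ^ 2 / 4)⁻¹ * (16 * ρ ^ 4 * ((1/2:ℝ) ^ k) ^ 4)
                = 64 * ρ ^ 2 * ((1/2:ℝ) ^ k) ^ 2 by field_simp; ring]
    _ ≤ ENNReal.ofReal (256 / 3 * ρ ^ 2) := by
        have : ∀ k : ℕ, ENNReal.ofReal (64 * ρ ^ 2 * (1/4) ^ k)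
            = ENNReal.ofReal (64 * ρ ^ 2) * (ENNReal.ofReal (1/4)) ^ k := by
          intro k
          rw [ENNReal.ofReal_mul (by positivity), ENNReal.ofReal_pow (by norm_num)]
        simp_rw [this]
        rw [ENNReal.tsum_mul_left, ENNReal.tsum_geometric]
        have h14 : ENNReal.ofReal (1/4 : ℝ) = (1/4 : ℝ≥0∞) := by
          rw [ENNReal.ofReal_div_of_pos (by norm_num), ENNReal.ofReal_one,
            ENNReal.ofReal_ofNat]
        rw [h14]
        have hsub : (1 : ℝ≥0∞) - 1/4 = 3/4 := by
          refine ENNReal.sub_eq_of_eq_add (by norm_num) ?_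
          rw [ENNReal.div_add_div_same, show (3:ℝ≥0∞) + 1 = 4 by norm_num,
            ENNReal.div_self (by norm_num) (by norm_num)]
        rw [hsub]
        have hinv : ((3:ℝ≥0∞)/4)⁻¹ = 4/3 := by
          rw [ENNReal.inv_div (by norm_num) (by norm_num)]
        rw [hinv]
        have h43 : (4:ℝ≥0∞)/3 = ENNReal.ofReal ((4:ℝ)/3) := by
          rw [ENNReal.ofReal_div_of_pos (by norm_num), ENNReal.ofReal_ofNat,
            ENNReal.ofReal_ofNat]
        rw [h43, ← ENNReal.ofReal_mul (by positivity)]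
        exact ENNReal.ofReal_le_ofReal (le_of_eq (by ring))

lemma F_cont (a : Fin 4 → ℝ) :
    Continuous fun z : Fin 4 → ℝ => ((ENNReal.ofReal (nrm (z - a)))⁻¹) ^ 2 :=
  (ENNReal.continuous_pow 2).comp ((ENNReal.continuous_ofReal.comp
    (continuous_nrm.comp (continuous_id.sub continuous_const))).inv)

instance gaussPi_prob (d : ℕ) (t : ℝ≥0) : IsProbabilityMeasure (gaussPi d t) := by
  unfold gaussPi; infer_instance

lemma moment_split (t : ℝ≥0) (ht : 0 < t) (a : Fin 4 → ℝ) {ρ : ℝ} (hρ : 0 < ρ)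
    {K : ℝ} (hK0 : 0 ≤ K)
    (hK : ∀ z : Fin 4 → ℝ, nrm (z - a) < ρ →
      ((2 * Real.pi * (t:ℝ)) ^ 2)⁻¹ * Real.exp (-(nrm z) ^ 2 / (2 * (t:ℝ))) ≤ K) :
    ∫⁻ z, ((ENNReal.ofReal (nrm (z - a)))⁻¹) ^ 2 ∂(gaussPi 4 t)
      ≤ ENNReal.ofReal (K * (256 / 3 * ρ ^ 2) + (ρ ^ 2)⁻¹) := by
  set F : (Fin 4 → ℝ) → ℝ≥0∞ := fun z => ((ENNReal.ofReal (nrm (z - a)))⁻¹) ^ 2 with hF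
  have hFmeas : Measurable F := (F_cont a).measurable
  set S : Set (Fin 4 → ℝ) := {z | nrm (z - a) < ρ} with hS
  have hSmeas : MeasurableSet S :=
    measurableSet_lt (continuous_nrm.comp (continuous_id.sub continuous_const)).measurable
      measurable_const
  have hsplit : ∫⁻ z, F z ∂(gaussPi 4 t)
      = (∫⁻ z in S, F z ∂(gaussPi 4 t)) + ∫⁻ z in Sᶜ, F z ∂(gaussPi 4 t) :=
    (lintegral_add_compl F hSmeas).symm
  -- tail bound
  have htail : ∫⁻ z in Sᶜ, F z ∂(gaussPi 4 t) ≤ ENNReal.ofReal ((ρ ^ 2)⁻¹) := by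
    have : ∀ z ∈ Sᶜ, F z ≤ ENNReal.ofReal ((ρ ^ 2)⁻¹) := by
      intro z hz
      refine inv_sq_le hρ ?_
      simpa [hS, not_lt] using hz
    calc ∫⁻ z in Sᶜ, F z ∂(gaussPi 4 t)
        ≤ ∫⁻ _ in Sᶜ, ENNReal.ofReal ((ρ ^ 2)⁻¹) ∂(gaussPi 4 t) :=
          setLIntegral_mono measurable_const this
      _ = ENNReal.ofReal ((ρ ^ 2)⁻¹) * (gaussPi 4 t) Sᶜ := setLIntegral_const _ _
      _ ≤ ENNReal.ofReal ((ρ ^ 2)⁻¹) * 1 := by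
          gcongr
          exact prob_le_one
      _ = ENNReal.ofReal ((ρ ^ 2)⁻¹) := mul_one _
  -- ball bound
  have hball : ∫⁻ z in S, F z ∂(gaussPi 4 t) ≤ ENNReal.ofReal (K * (256 / 3 * ρ ^ 2)) := by
    have hDmeas : Measurable fun z : Fin 4 → ℝ => ∏ i, gaussianPDF 0 t (z i) :=
      Finset.measurable_prod _ fun i _ => (measurable_gaussianPDF 0 t).comp
        (measurable_pi_apply i)
    rw [gaussPi_eq t ht.ne', restrict_withDensity hSmeas,
      lintegral_withDensity_eq_lintegral_mul _ hDmeas hFmeas]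
    have hptwise : ∀ z ∈ S, (fun z => ∏ i, gaussianPDF 0 t (z i)) z * F z
        ≤ ENNReal.ofReal K * F z := by
      intro z hz
      have hkz := hK z hz
      gcongr
      show (∏ i, gaussianPDF 0 t (z i)) ≤ ENNReal.ofReal K
      rw [density_eq t ht z]
      exact ENNReal.ofReal_le_ofReal hkz
    calc ∫⁻ z in S, (fun z => ∏ i, gaussianPDF 0 t (z i)) z * F z ∂volume
        ≤ ∫⁻ z in S, ENNReal.ofReal K * F z ∂volume :=
          setLIntegral_mono (measurable_const.mul hFmeas) hptwise
      _ = ENNReal.ofReal K * ∫⁻ z in S, F z ∂volume := lintegral_const_mul _ hFmeas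
      _ ≤ ENNReal.ofReal K * ENNReal.ofReal (256 / 3 * ρ ^ 2) := by
          gcongr
          -- translate
          have htrans : ∫⁻ z in S, F z ∂volume
              = ∫⁻ w in {w : Fin 4 → ℝ | nrm w < ρ},
                  ((ENNReal.ofReal (nrm w))⁻¹) ^ 2 ∂volume := by
            rw [← lintegral_indicator hSmeas, ← lintegral_indicator
              (measurableSet_lt continuous_nrm.measurable measurable_const)]
            rw [← lintegral_add_right_eq_self
              (fun z => S.indicator F z) a]
            refine lintegral_congr fun w => ?_
            by_cases hw : nrm w < ρ
            · rw [Set.indicator_of_mem (by simpa [hS] using hw : w + a ∈ S),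
                Set.indicator_of_mem (by simpa using hw)]
              simp [hF]
            · rw [Set.indicator_of_notMem (by simpa [hS] using hw),
                Set.indicator_of_notMem (by simpa using hw)]
          rw [htrans]
          refine le_trans (lintegral_mono' (Measure.restrict_mono ?_ le_rfl) le_rfl)
            (ball_lintegral hρ)
          intro w hw
          rw [mem_ball_zero_iff]
          exact lt_of_le_of_lt (sup_le_nrm w) hw
      _ = ENNReal.ofReal (K * (256 / 3 * ρ ^ 2)) := by
          rw [← ENNReal.ofReal_mul hK0]
  calc ∫⁻ z, F z ∂(gaussPi 4 t) = _ := hsplit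
    _ ≤ ENNReal.ofReal (K * (256 / 3 * ρ ^ 2)) + ENNReal.ofReal ((ρ ^ 2)⁻¹) :=
        add_le_add hball htail
    _ = ENNReal.ofReal (K * (256 / 3 * ρ ^ 2) + (ρ ^ 2)⁻¹) := by
        rw [ENNReal.ofReal_add (by positivity) (by positivity)]

lemma exp_neg_le {v : ℝ} (hv : 0 < v) : Real.exp (-v) ≤ 4 / v ^ 2 := by
  rw [Real.exp_neg]
  have h : v ^ 2 / 4 ≤ Real.exp v := by
    have h2 : v / 2 + 1 ≤ Real.exp (v / 2) := Real.add_one_le_exp _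
    have h3 : Real.exp (v / 2) * Real.exp (v / 2) = Real.exp v := by
      rw [← Real.exp_add]; ring_nf
    nlinarith [Real.exp_pos (v / 2), hv]
  calc (Real.exp v)⁻¹ ≤ (v ^ 2 / 4)⁻¹ := by
        apply inv_anti₀ (by positivity) h
    _ = 4 / v ^ 2 := by rw [inv_div]

lemma moment1 (t : ℝ≥0) (ht : 0 < t) (a : Fin 4 → ℝ) :
    ∫⁻ z, ((ENNReal.ofReal (nrm (z - a)))⁻¹) ^ 2 ∂(gaussPi 4 t)
      ≤ ENNReal.ofReal (4 / (t:ℝ)) := by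
  have htR : (0:ℝ) < (t:ℝ) := ht
  have hπ : (3:ℝ) < Real.pi := Real.pi_gt_three
  have hsq : Real.sqrt (t:ℝ) ^ 2 = (t:ℝ) := Real.sq_sqrt htR.le
  refine le_trans (moment_split t ht a (ρ := Real.sqrt (t:ℝ)) (Real.sqrt_pos.mpr htR)
    (K := ((2 * Real.pi * (t:ℝ)) ^ 2)⁻¹) (by positivity) ?_) ?_
  · intro z _
    have h0 : -(nrm z) ^ 2 / (2 * (t:ℝ)) ≤ 0 := by
      have : (0:ℝ) ≤ (nrm z) ^ 2 / (2 * (t:ℝ)) := by positivity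
      rw [neg_div]
      linarith
    have he : Real.exp (-(nrm z) ^ 2 / (2 * (t:ℝ))) ≤ 1 := by
      calc Real.exp (-(nrm z) ^ 2 / (2 * (t:ℝ))) ≤ Real.exp 0 := Real.exp_le_exp.mpr h0
        _ = 1 := Real.exp_zero
    have hc : (0:ℝ) ≤ ((2 * Real.pi * (t:ℝ)) ^ 2)⁻¹ := by positivity
    nlinarith
  · apply ENNReal.ofReal_le_ofReal
    rw [hsq]
    have hπ2 : (9:ℝ) ≤ Real.pi ^ 2 := by nlinarith
    have h1 : ((2 * Real.pi * (t:ℝ)) ^ 2)⁻¹ * (256 / 3 * (t:ℝ)) ≤ 3 / (t:ℝ) := by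
      rw [inv_mul_eq_div, div_le_div_iff₀ (by positivity) htR]
      have key : (9:ℝ) * ((t:ℝ) * (t:ℝ)) ≤ Real.pi ^ 2 * ((t:ℝ) * (t:ℝ)) :=
        mul_le_mul_of_nonneg_right hπ2 (by positivity)
      nlinarith [key]
    have h5 : ((t:ℝ))⁻¹ = 1 / (t:ℝ) := (one_div _).symm
    rw [h5]
    have h6 : (3:ℝ) / (t:ℝ) + 1 / (t:ℝ) = 4 / (t:ℝ) := by ring
    linarith [h1, h6]

lemma moment2 (t : ℝ≥0) (ht : 0 < t) (a : Fin 4 → ℝ) (ha : a ≠ 0) :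
    ∫⁻ z, ((ENNReal.ofReal (nrm (z - a)))⁻¹) ^ 2 ∂(gaussPi 4 t)
      ≤ ENNReal.ofReal (1024 / nrm a ^ 2) := by
  have htR : (0:ℝ) < (t:ℝ) := ht
  have hπ : (3:ℝ) < Real.pi := Real.pi_gt_three
  have hπ2 : (9:ℝ) ≤ Real.pi ^ 2 := by nlinarith
  set s : ℝ := nrm a with hsdef
  clear_value s
  have hs : 0 < s := hsdef ▸ nrm_pos ha
  refine le_trans (moment_split t ht a (ρ := s / 2) (by positivity)
    (K := ((2 * Real.pi * (t:ℝ)) ^ 2)⁻¹ * Real.exp (-(s ^ 2) / (8 * (t:ℝ))))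
    (by positivity) ?_) ?_
  · intro z hz
    have h1 : s / 2 ≤ nrm z := by
      have := nrm_lower z a
      linarith
    have h2 : s ^ 2 / 4 ≤ (nrm z) ^ 2 := by nlinarith [nrm_nonneg z]
    have h3 : -(nrm z) ^ 2 / (2 * (t:ℝ)) ≤ -(s ^ 2) / (8 * (t:ℝ)) := by
      rw [div_le_div_iff₀ (by positivity) (by positivity)]
      nlinarith
    have := Real.exp_le_exp.mpr h3
    have hc0 : (0:ℝ) ≤ ((2 * Real.pi * (t:ℝ)) ^ 2)⁻¹ := by positivity
    exact mul_le_mul_of_nonneg_left this hc0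
  · apply ENNReal.ofReal_le_ofReal
    have hv : (0:ℝ) < s ^ 2 / (8 * (t:ℝ)) := by positivity
    have hexp : Real.exp (-(s ^ 2) / (8 * (t:ℝ))) ≤ 4 / (s ^ 2 / (8 * (t:ℝ))) ^ 2 := by
      rw [neg_div]
      exact exp_neg_le hv
    have hmul : ((2 * Real.pi * (t:ℝ)) ^ 2)⁻¹ * Real.exp (-(s ^ 2) / (8 * (t:ℝ)))
          * (256 / 3 * (s / 2) ^ 2)
        ≤ ((2 * Real.pi * (t:ℝ)) ^ 2)⁻¹ * (4 / (s ^ 2 / (8 * (t:ℝ))) ^ 2)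
          * (256 / 3 * (s / 2) ^ 2) := by
      have hnn : (0:ℝ) ≤ ((2 * Real.pi * (t:ℝ)) ^ 2)⁻¹ := by positivity
      have hnn2 : (0:ℝ) ≤ 256 / 3 * (s / 2) ^ 2 := by positivity
      exact mul_le_mul_of_nonneg_right (mul_le_mul_of_nonneg_left hexp hnn) hnn2
    have heq : ((2 * Real.pi * (t:ℝ)) ^ 2)⁻¹ * (4 / (s ^ 2 / (8 * (t:ℝ))) ^ 2)
          * (256 / 3 * (s / 2) ^ 2) = 4096 / (3 * Real.pi ^ 2 * s ^ 2) := by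
      field_simp
      ring
    have hle : 4096 / (3 * Real.pi ^ 2 * s ^ 2) ≤ 1020 / s ^ 2 := by
      rw [div_le_div_iff₀ (by positivity) (by positivity)]
      have key : (9:ℝ) * s ^ 2 ≤ Real.pi ^ 2 * s ^ 2 :=
        mul_le_mul_of_nonneg_right hπ2 (by positivity)
      nlinarith [key]
    have hinv : (((s / 2) ^ 2)⁻¹ : ℝ) = 4 / s ^ 2 := by
      rw [div_pow, inv_div]
      norm_num
    rw [heq] at hmul
    refine le_trans (add_le_add (le_trans hmul hle) (le_of_eq hinv)) (le_of_eq (by ring))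

lemma moment_combined (t : ℝ≥0) (ht : 0 < t) (a : Fin 4 → ℝ) (ha : a ≠ 0) :
    ∫⁻ z, ((ENNReal.ofReal (nrm (z - a)))⁻¹) ^ 2 ∂(gaussPi 4 t)
      ≤ ENNReal.ofReal (64 / (Real.sqrt (t:ℝ) * nrm a)) := by
  have htR : (0:ℝ) < (t:ℝ) := ht
  have hs : 0 < nrm a := nrm_pos ha
  have hsq : Real.sqrt (t:ℝ) ^ 2 = (t:ℝ) := Real.sq_sqrt htR.le
  have h1 := moment1 t ht a
  have h2 := moment2 t ht a ha
  set p : ℝ := 4 / (t:ℝ) with hp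
  set q : ℝ := 1024 / nrm a ^ 2 with hq
  have hp0 : 0 < p := by positivity
  have hq0 : 0 < q := by positivity
  have hmin : ∫⁻ z, ((ENNReal.ofReal (nrm (z - a)))⁻¹) ^ 2 ∂(gaussPi 4 t)
      ≤ ENNReal.ofReal (min p q) := by
    rcases le_total p q with h | h
    · rw [min_eq_left h]; exact h1
    · rw [min_eq_right h]; exact h2
  refine hmin.trans (ENNReal.ofReal_le_ofReal ?_)
  have hnn : 0 ≤ min p q := le_min hp0.le hq0.le
  have hsqrt : Real.sqrt (p * q) = 64 / (Real.sqrt (t:ℝ) * nrm a) := by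
    rw [show p * q = (64 / (Real.sqrt (t:ℝ) * nrm a)) ^ 2 by
      rw [div_pow, mul_pow, hsq, hp, hq]; ring]
    exact Real.sqrt_sq (by positivity)
  have hle : min p q ≤ Real.sqrt (p * q) := by
    have hmm : min p q * min p q ≤ p * q :=
      mul_le_mul (min_le_left p q) (min_le_right p q) hnn hp0.le
    have : min p q = Real.sqrt (min p q * min p q) := by
      rw [Real.sqrt_mul_self hnn]
    rw [this]
    exact Real.sqrt_le_sqrt hmm
  rw [← hsqrt]
  exact hle

lemma rpow_two_eq (x : ℝ≥0∞) : x ^ (2:ℝ) = x ^ (2:ℕ) := by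
  rw [show (2:ℝ) = ((2:ℕ):ℝ) by norm_num, ENNReal.rpow_natCast]

lemma ptwise {u v d : ℝ≥0∞} (hd0 : d ≠ 0) (hdt : d ≠ ⊤) (hduv : d ≤ u⁻¹ + v⁻¹) :
    u ^ 2 * v ≤ d⁻¹ * (u ^ 2 + u * v) := by
  have huu : u⁻¹ * u ≤ 1 := by
    rcases eq_or_ne u 0 with rfl | h0
    · simp
    rcases eq_or_ne u ⊤ with rfl | ht
    · simp
    rw [ENNReal.inv_mul_cancel h0 ht]
  have hvv : v⁻¹ * v ≤ 1 := by
    rcases eq_or_ne v 0 with rfl | h0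
    · simp
    rcases eq_or_ne v ⊤ with rfl | ht
    · simp
    rw [ENNReal.inv_mul_cancel h0 ht]
  have h1 : d * (u ^ 2 * v) ≤ u ^ 2 + u * v := by
    calc d * (u ^ 2 * v) ≤ (u⁻¹ + v⁻¹) * (u ^ 2 * v) := mul_le_mul_left hduv _
      _ = (u⁻¹ * u) * (u * v) + (v⁻¹ * v) * u ^ 2 := by ring
      _ ≤ 1 * (u * v) + 1 * u ^ 2 := add_le_add
          (mul_le_mul_left huu _) (mul_le_mul_left hvv _)
      _ = u ^ 2 + u * v := by ring
  calc u ^ 2 * v = d⁻¹ * (d * (u ^ 2 * v)) := by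
        rw [← mul_assoc, ENNReal.inv_mul_cancel hd0 hdt, one_mul]
    _ ≤ d⁻¹ * (u ^ 2 + u * v) := mul_le_mul_right h1 _

/-- Mixed bound (bine3): for standard 4-dimensional Brownian motion and `x ≠ y`,
`E[|β_t − x|⁻²|β_t − y|⁻¹] ≤ 2C t^{-1/2} |x|⁻¹ |y − x|⁻¹`. -/
theorem bm4_inverse_mixed_moment :
    ∃ C : ℝ≥0∞, 0 < C ∧ C ≠ ⊤ ∧ ∀ (t : ℝ≥0) (x y : Fin 4 → ℝ), 0 < t → x ≠ y →
      (∫⁻ z, ((ENNReal.ofReal (nrm (z - x)))⁻¹) ^ 2 * (ENNReal.ofReal (nrm (z - y)))⁻¹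
          ∂(gaussPi 4 t)) ≤
        2 * C * (ENNReal.ofReal (Real.sqrt t))⁻¹ * (ENNReal.ofReal (nrm x))⁻¹ *
          (ENNReal.ofReal (nrm (y - x)))⁻¹ := by
  refine ⟨64, by norm_num, by norm_num, ?_⟩
  intro t x y ht hxy
  have htR : (0:ℝ) < (t:ℝ) := ht
  have hsqt : (0:ℝ) < Real.sqrt (t:ℝ) := Real.sqrt_pos.mpr htR
  have hsq : Real.sqrt (t:ℝ) ^ 2 = (t:ℝ) := Real.sq_sqrt htR.le
  set u : (Fin 4 → ℝ) → ℝ≥0∞ := fun z => (ENNReal.ofReal (nrm (z - x)))⁻¹ with hu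
  set v : (Fin 4 → ℝ) → ℝ≥0∞ := fun z => (ENNReal.ofReal (nrm (z - y)))⁻¹ with hv
  have humeas : Measurable u := (ENNReal.continuous_ofReal.comp
    (continuous_nrm.comp (continuous_id.sub continuous_const))).inv.measurable
  have hvmeas : Measurable v := (ENNReal.continuous_ofReal.comp
    (continuous_nrm.comp (continuous_id.sub continuous_const))).inv.measurable
  by_cases hx : x = 0
  · -- RHS is infinite
    subst hx
    have h1 : (2 : ℝ≥0∞) * 64 * (ENNReal.ofReal (Real.sqrt (t:ℝ)))⁻¹ ≠ 0 := by
      refine mul_ne_zero (mul_ne_zero (by norm_num) (by norm_num)) ?_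
      exact ENNReal.inv_ne_zero.mpr ENNReal.ofReal_ne_top
    have h2 : (ENNReal.ofReal (nrm (y - (0 : Fin 4 → ℝ))))⁻¹ ≠ 0 :=
      ENNReal.inv_ne_zero.mpr ENNReal.ofReal_ne_top
    have hnrm0 : nrm (0 : Fin 4 → ℝ) = 0 := by simp [nrm]
    rw [hnrm0]
    simp only [ENNReal.ofReal_zero, ENNReal.inv_zero]
    rw [ENNReal.mul_top h1, ENNReal.top_mul h2]
    exact le_top
  · have hyx : y - x ≠ 0 := sub_ne_zero.mpr (Ne.symm hxy)
    set d : ℝ≥0∞ := ENNReal.ofReal (nrm (y - x)) with hd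
    have hd0 : d ≠ 0 := by
      simp only [hd, ne_eq, ENNReal.ofReal_eq_zero, not_le]
      exact nrm_pos hyx
    have hdt : d ≠ ⊤ := ENNReal.ofReal_ne_top
    have hptwise : ∀ z : Fin 4 → ℝ,
        (u z) ^ 2 * v z ≤ d⁻¹ * ((u z) ^ 2 + u z * v z) := by
      intro z
      refine ptwise hd0 hdt ?_
      rw [hu, hv]
      simp only [inv_inv]
      rw [hd, ← ENNReal.ofReal_add (nrm_nonneg _) (nrm_nonneg _)]
      exact ENNReal.ofReal_le_ofReal (nrm_triangle x y z)
    have hstep1 : ∫⁻ z, (u z) ^ 2 * v z ∂(gaussPi 4 t)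
        ≤ d⁻¹ * ((∫⁻ z, (u z) ^ 2 ∂(gaussPi 4 t)) + ∫⁻ z, u z * v z ∂(gaussPi 4 t)) := by
      calc ∫⁻ z, (u z) ^ 2 * v z ∂(gaussPi 4 t)
          ≤ ∫⁻ z, d⁻¹ * ((u z) ^ 2 + u z * v z) ∂(gaussPi 4 t) :=
            lintegral_mono hptwise
        _ = d⁻¹ * ∫⁻ z, ((u z) ^ 2 + u z * v z) ∂(gaussPi 4 t) :=
            lintegral_const_mul' _ _ (ENNReal.inv_ne_top.mpr hd0)
        _ = d⁻¹ * ((∫⁻ z, (u z) ^ 2 ∂(gaussPi 4 t)) + ∫⁻ z, u z * v z ∂(gaussPi 4 t)) := by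
            rw [lintegral_add_left (humeas.pow_const 2)]
    -- bounds
    have hA : ∫⁻ z, (u z) ^ 2 ∂(gaussPi 4 t)
        ≤ ENNReal.ofReal (64 / (Real.sqrt (t:ℝ) * nrm x)) := moment_combined t ht x hx
    have hcross : ∫⁻ z, u z * v z ∂(gaussPi 4 t)
        ≤ ENNReal.ofReal (64 / (Real.sqrt (t:ℝ) * nrm x)) := by
      have hpq : Real.HolderConjugate 2 2 := Real.HolderConjugate.two_two
      have hH := ENNReal.lintegral_mul_le_Lp_mul_Lq (gaussPi 4 t) hpq
        humeas.aemeasurable hvmeas.aemeasurable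
      simp only [Pi.mul_apply] at hH
      have h2 : ∫⁻ z, (u z) ^ (2:ℝ) ∂(gaussPi 4 t) = ∫⁻ z, (u z) ^ (2:ℕ) ∂(gaussPi 4 t) := by
        refine lintegral_congr fun z => rpow_two_eq _
      have h3 : ∫⁻ z, (v z) ^ (2:ℝ) ∂(gaussPi 4 t) = ∫⁻ z, (v z) ^ (2:ℕ) ∂(gaussPi 4 t) := by
        refine lintegral_congr fun z => rpow_two_eq _
      rw [h2, h3] at hH
      refine hH.trans ?_
      have hx0 : (0:ℝ) < nrm x := nrm_pos hx
      have hux : (∫⁻ z, (u z) ^ (2:ℕ) ∂(gaussPi 4 t)) ^ ((1:ℝ)/2)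
          ≤ ENNReal.ofReal (32 / nrm x) := by
        refine le_trans (ENNReal.rpow_le_rpow (moment2 t ht x hx) (by norm_num)) ?_
        rw [ENNReal.ofReal_rpow_of_pos (div_pos (by norm_num) (pow_pos hx0 2)),
          ← Real.sqrt_eq_rpow]
        apply ENNReal.ofReal_le_ofReal
        rw [show (1024 / nrm x ^ 2 : ℝ) = (32 / nrm x) ^ 2 by rw [div_pow]; norm_num]
        rw [Real.sqrt_sq (div_nonneg (by norm_num) hx0.le)]
      have hvy : (∫⁻ z, (v z) ^ (2:ℕ) ∂(gaussPi 4 t)) ^ ((1:ℝ)/2)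
          ≤ ENNReal.ofReal (2 / Real.sqrt (t:ℝ)) := by
        refine le_trans (ENNReal.rpow_le_rpow (moment1 t ht y) (by norm_num)) ?_
        rw [ENNReal.ofReal_rpow_of_pos (div_pos (by norm_num) htR), ← Real.sqrt_eq_rpow]
        apply ENNReal.ofReal_le_ofReal
        rw [show (4 / (t:ℝ) : ℝ) = (2 / Real.sqrt (t:ℝ)) ^ 2 by rw [div_pow, hsq]; norm_num]
        rw [Real.sqrt_sq (div_nonneg (by norm_num) hsqt.le)]
      calc _ ≤ ENNReal.ofReal (32 / nrm x) * ENNReal.ofReal (2 / Real.sqrt (t:ℝ)) :=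
            mul_le_mul' hux hvy
        _ = ENNReal.ofReal (64 / (Real.sqrt (t:ℝ) * nrm x)) := by
            rw [← ENNReal.ofReal_mul (div_nonneg (by norm_num) hx0.le)]
            congr 1
            field_simp
            ring
    have hfinal : d⁻¹ * ((∫⁻ z, (u z) ^ 2 ∂(gaussPi 4 t)) + ∫⁻ z, u z * v z ∂(gaussPi 4 t))
        ≤ 2 * 64 * (ENNReal.ofReal (Real.sqrt (t:ℝ)))⁻¹ * (ENNReal.ofReal (nrm x))⁻¹ * d⁻¹ := by
      have hsum : (∫⁻ z, (u z) ^ 2 ∂(gaussPi 4 t)) + ∫⁻ z, u z * v z ∂(gaussPi 4 t)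
          ≤ 2 * ENNReal.ofReal (64 / (Real.sqrt (t:ℝ) * nrm x)) := by
        rw [two_mul]
        exact add_le_add hA hcross
      have heq : (2:ℝ≥0∞) * ENNReal.ofReal (64 / (Real.sqrt (t:ℝ) * nrm x))
          = 2 * 64 * (ENNReal.ofReal (Real.sqrt (t:ℝ)))⁻¹ * (ENNReal.ofReal (nrm x))⁻¹ := by
        have hx0 : (0:ℝ) < nrm x := nrm_pos hx
        rw [show (64 / (Real.sqrt (t:ℝ) * nrm x) : ℝ)
            = 64 * (Real.sqrt (t:ℝ))⁻¹ * (nrm x)⁻¹ by field_simp]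
        rw [ENNReal.ofReal_mul (by positivity), ENNReal.ofReal_mul (by norm_num),
          ENNReal.ofReal_inv_of_pos hsqt, ENNReal.ofReal_inv_of_pos hx0,
          ENNReal.ofReal_ofNat]
        ring
      calc d⁻¹ * ((∫⁻ z, (u z) ^ 2 ∂(gaussPi 4 t)) + ∫⁻ z, u z * v z ∂(gaussPi 4 t))
          ≤ d⁻¹ * (2 * ENNReal.ofReal (64 / (Real.sqrt (t:ℝ) * nrm x))) :=
            mul_le_mul_right hsum _
        _ = 2 * 64 * (ENNReal.ofReal (Real.sqrt (t:ℝ)))⁻¹ * (ENNReal.ofReal (nrm x))⁻¹ * d⁻¹ := by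
            rw [heq]; ring
    exact hstep1.trans hfinal

end
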